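/- Let m₁, m₂ be natural numbers and X, Y, α, β, γ, δ complex numbers. Then ∫₀^{2π} ∫₀^{π} (uX + vY)^{m₁+m₂} (α ū + β v̄)^{m₁} (γ ū + δ v̄)^{m₂} sinθ dθ dφ = (4π/(m₁+m₂+1)) · (αX + βY)^{m₁} (γX + δY)^{m₂}. -/

import Mathlib

open Complex Real

/-- The spinor coordinate `u = cos(θ/2)·e^{iφ/2}`. -/
noncomputable def spinU (θ φ : ℝ) : ℂ :=
  (Real.cos (θ / 2) : ℂ) * Complex.exp (Complex.I * φ / 2)

/-- The spinor coordinate `v = sin(θ/2)·e^{-iφ/2}`. -/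
noncomputable def spinV (θ φ : ℝ) : ℂ :=
  (Real.sin (θ / 2) : ℂ) * Complex.exp (-(Complex.I * φ / 2))

noncomputable def trig (m₁ m₂ k j₁ j₂ : ℕ) (θ : ℝ) : ℝ :=
  Real.cos (θ/2) ^ (k + j₁ + j₂) * Real.sin (θ/2) ^ ((m₁+m₂-k) + (m₁-j₁) + (m₂-j₂)) * Real.sin θ

noncomputable def Kc (m₁ m₂ : ℕ) (X Y α β γ δ : ℂ) (k j₁ j₂ : ℕ) : ℂ :=
  ((m₁+m₂).choose k : ℂ) * (m₁.choose j₁ : ℂ) * (m₂.choose j₂ : ℂ) *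
    X ^ k * Y ^ (m₁+m₂-k) * α ^ j₁ * β ^ (m₁-j₁) * γ ^ j₂ * δ ^ (m₂-j₂)

lemma conj_spinU (θ φ : ℝ) : (starRingEnd ℂ) (spinU θ φ)
    = (Real.cos (θ/2) : ℂ) * Complex.exp (-(Complex.I * φ / 2)) := by
  unfold spinU
  rw [map_mul, Complex.conj_ofReal, ← Complex.exp_conj]
  congr 1
  rw [map_div₀, map_mul, Complex.conj_I, Complex.conj_ofReal, map_ofNat]
  ring

lemma conj_spinV (θ φ : ℝ) : (starRingEnd ℂ) (spinV θ φ)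
    = (Real.sin (θ/2) : ℂ) * Complex.exp (Complex.I * φ / 2) := by
  unfold spinV
  rw [map_mul, Complex.conj_ofReal, ← Complex.exp_conj]
  congr 1
  rw [map_neg, map_div₀, map_mul, Complex.conj_I, Complex.conj_ofReal, map_ofNat]
  ring

lemma exp_pow_combine (φ : ℝ) (A B : ℕ) (d : ℤ) (h : (A:ℤ) = B + 2*d) :
    Complex.exp (Complex.I * φ / 2) ^ A * Complex.exp (-(Complex.I * φ / 2)) ^ B
      = Complex.exp (Complex.I * φ * d) := by
  rw [← Complex.exp_nat_mul, ← Complex.exp_nat_mul, ← Complex.exp_add]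
  congr 1
  have hc : (A:ℂ) = (B:ℂ) + 2*(d:ℂ) := by exact_mod_cast h
  rw [hc]; ring

lemma term_eq (m₁ m₂ k j₁ j₂ : ℕ) (hk : k ≤ m₁ + m₂) (h1 : j₁ ≤ m₁) (h2 : j₂ ≤ m₂)
    (X Y α β γ δ : ℂ) (θ φ : ℝ) :
    (spinU θ φ * X) ^ k * (spinV θ φ * Y) ^ (m₁ + m₂ - k) * ((m₁+m₂).choose k : ℂ) *
      ((α * (starRingEnd ℂ) (spinU θ φ)) ^ j₁ * (β * (starRingEnd ℂ) (spinV θ φ)) ^ (m₁ - j₁) *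
        (m₁.choose j₁ : ℂ)) *
      ((γ * (starRingEnd ℂ) (spinU θ φ)) ^ j₂ * (δ * (starRingEnd ℂ) (spinV θ φ)) ^ (m₂ - j₂) *
        (m₂.choose j₂ : ℂ)) * (Real.sin θ : ℂ)
    = (Kc m₁ m₂ X Y α β γ δ k j₁ j₂ *
        Complex.exp (Complex.I * φ * ((k:ℤ) - ((j₁:ℤ) + (j₂:ℤ))))) *
      ((trig m₁ m₂ k j₁ j₂ θ : ℝ) : ℂ) := by
  unfold Kc trig
  rw [conj_spinU, conj_spinV]
  unfold spinU spinV
  simp only [Complex.ofReal_mul, Complex.ofReal_pow]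
  have hE := exp_pow_combine φ (k + (m₁-j₁) + (m₂-j₂)) ((m₁+m₂-k) + j₁ + j₂)
    ((k:ℤ) - ((j₁:ℤ) + (j₂:ℤ))) (by omega)
  calc (((Real.cos (θ/2):ℂ) * Complex.exp (Complex.I * φ / 2) * X) ^ k *
        ((Real.sin (θ/2):ℂ) * Complex.exp (-(Complex.I * φ / 2)) * Y) ^ (m₁+m₂-k) *
        ((m₁+m₂).choose k : ℂ) *
        ((α * ((Real.cos (θ/2):ℂ) * Complex.exp (-(Complex.I * φ / 2)))) ^ j₁ *
          (β * ((Real.sin (θ/2):ℂ) * Complex.exp (Complex.I * φ / 2))) ^ (m₁-j₁) *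
          (m₁.choose j₁ : ℂ)) *
        ((γ * ((Real.cos (θ/2):ℂ) * Complex.exp (-(Complex.I * φ / 2)))) ^ j₂ *
          (δ * ((Real.sin (θ/2):ℂ) * Complex.exp (Complex.I * φ / 2))) ^ (m₂-j₂) *
          (m₂.choose j₂ : ℂ)) * (Real.sin θ : ℂ))
      = (Complex.exp (Complex.I * φ / 2) ^ (k + (m₁-j₁) + (m₂-j₂)) *
          Complex.exp (-(Complex.I * φ / 2)) ^ ((m₁+m₂-k) + j₁ + j₂)) *
        (((m₁+m₂).choose k : ℂ) * (m₁.choose j₁ : ℂ) * (m₂.choose j₂ : ℂ) *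
          X ^ k * Y ^ (m₁+m₂-k) * α ^ j₁ * β ^ (m₁-j₁) * γ ^ j₂ * δ ^ (m₂-j₂) *
          ((Real.cos (θ/2):ℂ) ^ (k + j₁ + j₂) * (Real.sin (θ/2):ℂ) ^ ((m₁+m₂-k) + (m₁-j₁) + (m₂-j₂)) *
            (Real.sin θ : ℂ))) := by ring
    _ = _ := by rw [hE]; push_cast; ring

lemma expand_integrand (m₁ m₂ : ℕ) (X Y α β γ δ : ℂ) (θ φ : ℝ) :
    (spinU θ φ * X + spinV θ φ * Y) ^ (m₁ + m₂) *
        (α * (starRingEnd ℂ) (spinU θ φ) + β * (starRingEnd ℂ) (spinV θ φ)) ^ m₁ *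
        (γ * (starRingEnd ℂ) (spinU θ φ) + δ * (starRingEnd ℂ) (spinV θ φ)) ^ m₂ *
        (Real.sin θ : ℂ)
    = ∑ j₂ ∈ Finset.range (m₂+1), ∑ j₁ ∈ Finset.range (m₁+1), ∑ k ∈ Finset.range (m₁+m₂+1),
        (Kc m₁ m₂ X Y α β γ δ k j₁ j₂ *
          Complex.exp (Complex.I * φ * ((k:ℤ) - ((j₁:ℤ) + (j₂:ℤ))))) *
        ((trig m₁ m₂ k j₁ j₂ θ : ℝ) : ℂ) := by
  rw [add_pow, add_pow, add_pow]
  simp only [Finset.sum_mul, Finset.mul_sum]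
  refine Finset.sum_congr rfl fun j₂ h2 => Finset.sum_congr rfl fun j₁ h1 =>
    Finset.sum_congr rfl fun k hk => ?_
  have hk' : k ≤ m₁ + m₂ := Nat.lt_succ_iff.mp (Finset.mem_range.mp hk)
  have h1' : j₁ ≤ m₁ := Nat.lt_succ_iff.mp (Finset.mem_range.mp h1)
  have h2' : j₂ ≤ m₂ := Nat.lt_succ_iff.mp (Finset.mem_range.mp h2)
  have := term_eq m₁ m₂ k j₁ j₂ hk' h1' h2' X Y α β γ δ θ φ
  linear_combination this
section FactLemmas
open Nat

lemma prod_fact (q p : ℕ) : ∏ j ∈ Finset.range (p+1), ((q:ℂ)+1+j) = ((q+p+1)! / q ! : ℝ) := by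
  induction p with
  | zero =>
    have hq : ((q ! : ℕ) : ℂ) ≠ 0 := Nat.cast_ne_zero.mpr (Nat.factorial_ne_zero q)
    rw [show q+0+1 = q+1 by ring]
    push_cast [Nat.factorial_succ, Finset.prod_range_one]
    field_simp
    ring
  | succ n ih =>
    rw [Finset.prod_range_succ, ih]
    have h1 : (q+(n+1)+1)! = (q+n+1+1) * (q+n+1)! := by
      rw [show q+(n+1)+1 = (q+n+1)+1 by ring, Nat.factorial_succ]
    rw [h1]
    have hq : (q ! : ℝ) ≠ 0 := by positivity
    push_cast
    field_simp
    ring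

lemma beta_nat (p q : ℕ) : ∫ x in (0:ℝ)..1, x ^ q * (1-x) ^ p
    = (q ! * p ! : ℝ) / (q + p + 1)! := by
  have hu : 0 < Complex.re ((q:ℂ)+1) := by simp; positivity
  have hb := Complex.betaIntegral_eval_nat_add_one_right hu p
  rw [Complex.betaIntegral] at hb
  have heq : ∀ x : ℝ, (x:ℂ) ^ ((q:ℂ)+1-1) * (1-(x:ℂ)) ^ ((p:ℂ)+1-1) = ((x ^ q * (1-x)^p : ℝ) : ℂ) := by
    intro x
    rw [add_sub_cancel_right, add_sub_cancel_right, Complex.cpow_natCast, Complex.cpow_natCast]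
    push_cast; ring
  rw [intervalIntegral.integral_congr (fun x _ => heq x), intervalIntegral.integral_ofReal,
    prod_fact q p] at hb
  have hq : (q ! : ℝ) ≠ 0 := by positivity
  have hqp : ((q+p+1)! : ℝ) ≠ 0 := by positivity
  have : ((∫ x in (0:ℝ)..1, x ^ q * (1-x) ^ p : ℝ) : ℂ) = ((q ! * p ! / (q+p+1)! : ℝ) : ℂ) := by
    rw [hb]
    push_cast
    rw [div_div_eq_mul_div]
    ring
  exact_mod_cast this

lemma theta_int (p q : ℕ) :
    ∫ θ in (0:ℝ)..Real.pi, Real.cos (θ/2)^(2*p) * Real.sin (θ/2)^(2*q) * Real.sin θ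
      = 2 * ((q ! * p ! : ℝ) / (q + p + 1)!) := by
  have hderiv : ∀ x ∈ Set.uIcc (0:ℝ) Real.pi,
      HasDerivAt (fun θ : ℝ => Real.sin (θ/2)^2) (Real.sin (x/2) * Real.cos (x/2)) x := by
    intro x _
    have h1 : HasDerivAt (fun θ:ℝ => θ/2) (1/2) x := (hasDerivAt_id x).div_const 2
    have h2 := (h1.sin).fun_pow 2
    refine h2.congr_deriv ?_
    simp; ring
  have hcont : ContinuousOn (fun x : ℝ => Real.sin (x/2) * Real.cos (x/2)) (Set.uIcc 0 Real.pi) := by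
    fun_prop
  have hg : Continuous (fun s : ℝ => s ^ q * (1-s)^p) := by fun_prop
  have h := intervalIntegral.integral_comp_smul_deriv hderiv hcont hg
  simp only [Function.comp] at h
  have h0 : Real.sin ((0:ℝ)/2)^2 = 0 := by simp
  have h1 : Real.sin (Real.pi/2)^2 = 1 := by simp
  rw [h0, h1, beta_nat p q] at h
  have heq : ∀ x : ℝ, Real.cos (x/2)^(2*p) * Real.sin (x/2)^(2*q) * Real.sin x
      = 2 * ((Real.sin (x/2) * Real.cos (x/2)) • ((Real.sin (x/2)^2) ^ q * (1-Real.sin (x/2)^2)^p)) := by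
    intro x
    have hs : Real.sin x = 2 * Real.sin (x/2) * Real.cos (x/2) := by
      rw [show x = 2*(x/2) by ring, Real.sin_two_mul]; ring_nf
    rw [smul_eq_mul, ← Real.cos_sq' (x/2), hs, ← pow_mul, ← pow_mul]
    ring
  rw [intervalIntegral.integral_congr (fun x _ => heq x), intervalIntegral.integral_const_mul, h]

lemma coeff_eq (n j : ℕ) (h : j ≤ n) :
    (n.choose j : ℝ) * (2 * (((n-j)! : ℝ) * (j ! : ℝ) / ((n+1)! : ℝ))) * (2*Real.pi)
      = 4 * Real.pi / (n+1) := by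
  have h1 : (n.choose j : ℝ) * (j !) * ((n-j)!) = n ! := by
    exact_mod_cast Nat.choose_mul_factorial_mul_factorial h
  have h2 : ((n+1)! : ℝ) = (n+1) * n ! := by
    rw [Nat.factorial_succ]; push_cast; ring
  have h3 : (n ! : ℝ) ≠ 0 := by positivity
  have h4 : ((n:ℝ)+1) ≠ 0 := by positivity
  rw [h2]
  field_simp
  linear_combination 4 * h1

end FactLemmas

lemma phi_int (d : ℤ) : ∫ φ in (0:ℝ)..(2*Real.pi), Complex.exp (Complex.I * φ * d)
    = if d = 0 then (2*Real.pi:ℂ) else 0 := by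
  rcases eq_or_ne d 0 with h | h
  · simp [h]
  · rw [if_neg h]
    have hc : (Complex.I * d) ≠ 0 := by
      simp [Complex.I_ne_zero, Complex.ext_iff]
      exact_mod_cast h
    have heq : ∀ φ : ℝ, Complex.I * φ * d = (Complex.I * d) * φ := by intro φ; ring
    simp_rw [heq]
    rw [integral_exp_mul_complex hc]
    have h1 : Complex.exp (Complex.I * d * (2*Real.pi)) = 1 := by
      have h2 : Complex.I * d * (2*Real.pi) = (d : ℤ) * (2 * Real.pi * Complex.I) := by ring
      rw [h2, Complex.exp_int_mul_two_pi_mul_I]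
    simp [h1]

lemma int3 {s1 s2 s3 : Finset ℕ} (f : ℕ → ℕ → ℕ → ℝ → ℂ) (a b : ℝ)
    (hf : ∀ i j l, Continuous (f i j l)) :
    ∫ x in a..b, ∑ i ∈ s1, ∑ j ∈ s2, ∑ l ∈ s3, f i j l x
      = ∑ i ∈ s1, ∑ j ∈ s2, ∑ l ∈ s3, ∫ x in a..b, f i j l x := by
  rw [intervalIntegral.integral_finset_sum (fun i _ =>
    ((continuous_finset_sum _ fun j _ => continuous_finset_sum _ fun l _ => hf i j l).intervalIntegrable a b))]
  refine Finset.sum_congr rfl fun i _ => ?_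
  rw [intervalIntegral.integral_finset_sum (fun j _ =>
    ((continuous_finset_sum _ fun l _ => hf i j l).intervalIntegrable a b))]
  refine Finset.sum_congr rfl fun j _ => ?_
  rw [intervalIntegral.integral_finset_sum (fun l _ => (hf i j l).intervalIntegrable a b)]


/-- The SU(2)-covariant sphere integral
`∫₀^{2π} ∫₀^{π} (uX + vY)^{m₁+m₂} (αū + βv̄)^{m₁} (γū + δv̄)^{m₂} sinθ dθ dφ
  = (4π/(m₁+m₂+1))·(αX + βY)^{m₁} (γX + δY)^{m₂}`. -/
theorem spinor_covariant_integral (m₁ m₂ : ℕ) (X Y α β γ δ : ℂ) :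
    (∫ φ in (0:ℝ)..(2 * Real.pi), ∫ θ in (0:ℝ)..Real.pi,
        (spinU θ φ * X + spinV θ φ * Y) ^ (m₁ + m₂) *
          (α * (starRingEnd ℂ) (spinU θ φ) + β * (starRingEnd ℂ) (spinV θ φ)) ^ m₁ *
          (γ * (starRingEnd ℂ) (spinU θ φ) + δ * (starRingEnd ℂ) (spinV θ φ)) ^ m₂ *
          (Real.sin θ : ℂ))
      = ((4 * Real.pi / (m₁ + m₂ + 1) : ℝ) : ℂ) *
          ((α * X + β * Y) ^ m₁ * (γ * X + δ * Y) ^ m₂) := by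
  have hθ : ∀ φ : ℝ, (∫ θ in (0:ℝ)..Real.pi,
        (spinU θ φ * X + spinV θ φ * Y) ^ (m₁ + m₂) *
          (α * (starRingEnd ℂ) (spinU θ φ) + β * (starRingEnd ℂ) (spinV θ φ)) ^ m₁ *
          (γ * (starRingEnd ℂ) (spinU θ φ) + δ * (starRingEnd ℂ) (spinV θ φ)) ^ m₂ *
          (Real.sin θ : ℂ))
      = ∑ j₂ ∈ Finset.range (m₂+1), ∑ j₁ ∈ Finset.range (m₁+1), ∑ k ∈ Finset.range (m₁+m₂+1),
          (Kc m₁ m₂ X Y α β γ δ k j₁ j₂ *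
            Complex.exp (Complex.I * φ * ((k:ℤ) - ((j₁:ℤ) + (j₂:ℤ))))) *
          ((∫ θ in (0:ℝ)..Real.pi, trig m₁ m₂ k j₁ j₂ θ : ℝ) : ℂ) := by
    intro φ
    have hcont : ∀ j₂ j₁ k : ℕ, Continuous (fun θ : ℝ =>
        (Kc m₁ m₂ X Y α β γ δ k j₁ j₂ *
          Complex.exp (Complex.I * φ * ((k:ℤ) - ((j₁:ℤ) + (j₂:ℤ))))) *
        ((trig m₁ m₂ k j₁ j₂ θ : ℝ) : ℂ)) := by
      intro j₂ j₁ k; unfold trig; fun_prop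
    refine (intervalIntegral.integral_congr
      (fun θ _ => expand_integrand m₁ m₂ X Y α β γ δ θ φ)).trans ?_
    refine (int3 _ _ _ hcont).trans ?_
    refine Finset.sum_congr rfl fun j₂ _ => Finset.sum_congr rfl fun j₁ _ =>
      Finset.sum_congr rfl fun k _ => ?_
    simp only [intervalIntegral.integral_const_mul, intervalIntegral.integral_ofReal]
  rw [intervalIntegral.integral_congr (fun φ _ => hθ φ)]
  have hcontφ : ∀ j₂ j₁ k : ℕ, Continuous (fun φ : ℝ =>
      (Kc m₁ m₂ X Y α β γ δ k j₁ j₂ *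
        Complex.exp (Complex.I * φ * ((k:ℤ) - ((j₁:ℤ) + (j₂:ℤ))))) *
      ((∫ θ in (0:ℝ)..Real.pi, trig m₁ m₂ k j₁ j₂ θ : ℝ) : ℂ)) := by
    intro j₂ j₁ k; fun_prop
  refine (int3 _ _ _ hcontφ).trans ?_
  have step2 : ∀ j₂ j₁ k : ℕ, (∫ φ in (0:ℝ)..(2*Real.pi),
      (Kc m₁ m₂ X Y α β γ δ k j₁ j₂ *
        Complex.exp (Complex.I * φ * ((k:ℤ) - ((j₁:ℤ) + (j₂:ℤ))))) *
      ((∫ θ in (0:ℝ)..Real.pi, trig m₁ m₂ k j₁ j₂ θ : ℝ) : ℂ))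
      = (Kc m₁ m₂ X Y α β γ δ k j₁ j₂ *
          ((∫ θ in (0:ℝ)..Real.pi, trig m₁ m₂ k j₁ j₂ θ : ℝ) : ℂ)) *
        (if ((k:ℤ) - ((j₁:ℤ) + (j₂:ℤ))) = 0 then (2*Real.pi:ℂ) else 0) := by
    intro j₂ j₁ k
    refine (intervalIntegral.integral_congr (g := fun φ : ℝ =>
      (Kc m₁ m₂ X Y α β γ δ k j₁ j₂ *
        ((∫ θ in (0:ℝ)..Real.pi, trig m₁ m₂ k j₁ j₂ θ : ℝ) : ℂ)) *
      Complex.exp (Complex.I * φ * ((k:ℤ) - ((j₁:ℤ) + (j₂:ℤ)))))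
      (fun φ _ => by ring)).trans ?_
    rw [intervalIntegral.integral_const_mul]
    have hp := phi_int ((k:ℤ) - ((j₁:ℤ) + (j₂:ℤ)))
    push_cast at hp ⊢
    rw [hp]
  refine (Finset.sum_congr rfl fun j₂ _ => Finset.sum_congr rfl fun j₁ _ =>
    Finset.sum_congr rfl fun k _ => step2 j₂ j₁ k).trans ?_
  have collapse : ∀ j₂ ∈ Finset.range (m₂+1), ∀ j₁ ∈ Finset.range (m₁+1),
      (∑ k ∈ Finset.range (m₁+m₂+1),
        (Kc m₁ m₂ X Y α β γ δ k j₁ j₂ *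
          ((∫ θ in (0:ℝ)..Real.pi, trig m₁ m₂ k j₁ j₂ θ : ℝ) : ℂ)) *
        (if ((k:ℤ) - ((j₁:ℤ) + (j₂:ℤ))) = 0 then (2*Real.pi:ℂ) else 0))
      = (Kc m₁ m₂ X Y α β γ δ (j₁+j₂) j₁ j₂ *
          ((∫ θ in (0:ℝ)..Real.pi, trig m₁ m₂ (j₁+j₂) j₁ j₂ θ : ℝ) : ℂ)) * (2*Real.pi:ℂ) := by
    intro j₂ hj₂ j₁ hj₁
    have hj₂' : j₂ ≤ m₂ := Nat.lt_succ_iff.mp (Finset.mem_range.mp hj₂)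
    have hj₁' : j₁ ≤ m₁ := Nat.lt_succ_iff.mp (Finset.mem_range.mp hj₁)
    rw [Finset.sum_eq_single (j₁+j₂)]
    · rw [if_pos (by push_cast; ring)]
    · intro k _ hne
      rw [if_neg (by omega), mul_zero]
    · intro habs
      exact absurd (Finset.mem_range.mpr (by omega)) habs
  refine (Finset.sum_congr rfl fun j₂ hj₂ => Finset.sum_congr rfl fun j₁ hj₁ =>
    collapse j₂ hj₂ j₁ hj₁).trans ?_
  -- final resummation
  rw [add_pow, add_pow]
  simp only [Finset.mul_sum, Finset.sum_mul]
  refine Finset.sum_congr rfl fun j₂ hj₂ => Finset.sum_congr rfl fun j₁ hj₁ => ?_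
  have hj₂' : j₂ ≤ m₂ := Nat.lt_succ_iff.mp (Finset.mem_range.mp hj₂)
  have hj₁' : j₁ ≤ m₁ := Nat.lt_succ_iff.mp (Finset.mem_range.mp hj₁)
  have hRval : (∫ θ in (0:ℝ)..Real.pi, trig m₁ m₂ (j₁+j₂) j₁ j₂ θ)
      = 2 * (((m₁+m₂-(j₁+j₂)).factorial : ℝ) * ((j₁+j₂).factorial : ℝ)
          / ((m₁+m₂+1).factorial : ℝ)) := by
    unfold trig
    rw [show (j₁+j₂)+j₁+j₂ = 2*(j₁+j₂) by ring,
        show (m₁+m₂-(j₁+j₂))+(m₁-j₁)+(m₂-j₂) = 2*(m₁+m₂-(j₁+j₂)) by omega,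
        theta_int (j₁+j₂) (m₁+m₂-(j₁+j₂)),
        show (m₁+m₂-(j₁+j₂))+(j₁+j₂)+1 = m₁+m₂+1 by omega]
  rw [hRval]
  unfold Kc
  have hcC := congrArg (Complex.ofReal) (coeff_eq (m₁+m₂) (j₁+j₂) (by omega))
  push_cast at hcC ⊢
  rw [show m₁+m₂-(j₁+j₂) = (m₁-j₁)+(m₂-j₂) by omega] at hcC ⊢
  linear_combination hcC * ((m₁.choose j₁ : ℂ) * (m₂.choose j₂ : ℂ) * X^j₁ * X^j₂ *
    Y^(m₁-j₁) * Y^(m₂-j₂) * α^j₁ * β^(m₁-j₁) * γ^j₂ * δ^(m₂-j₂))
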